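/- On a chain of L qubits, the operator Ψ(y) = Σ_{s=0}^{⌊(L−1)/2⌋} (−y)^s Z_{2s+1} Π_{j=1}^{2s} X_j commutes with Z₁Z₂ and with every term y Y_j Y_{j+1} + Z_{j+1} Z_{j+2} for 1 ≤ j ≤ L−2. -/
import Mathlib

open Matrix

/-- Pauli X matrix. -/
noncomputable def PX : Matrix (Fin 2) (Fin 2) ℂ := !![0, 1; 1, 0]

/-- Pauli Y matrix. -/
noncomputable def PY : Matrix (Fin 2) (Fin 2) ℂ := !![0, -Complex.I; Complex.I, 0]

/-- Pauli Z matrix. -/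
noncomputable def PZ : Matrix (Fin 2) (Fin 2) ℂ := !![1, 0; 0, -1]

/-- Tensor product of one-qubit operators `f i` across a chain of `L` qubits,
as a matrix on `(ℂ²)^{⊗L}` (indexed by `Fin L → Fin 2`). -/
noncomputable def prodOp (L : ℕ) (f : Fin L → Matrix (Fin 2) (Fin 2) ℂ) :
    Matrix (Fin L → Fin 2) (Fin L → Fin 2) ℂ :=
  Matrix.of fun a b => ∏ i, f i (a i) (b i)

/-- A single-site operator `M` acting on site `j` of a chain of `L` qubits. -/
noncomputable def onSite (L : ℕ) (M : Matrix (Fin 2) (Fin 2) ℂ) (j : Fin L) :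
    Matrix (Fin L → Fin 2) (Fin L → Fin 2) ℂ :=
  prodOp L (fun i => if i = j then M else 1)


/-- The YZ limit of the Fendley strong zero mode,
`Ψ(y) = Σ_{s=0}^{⌊(L-1)/2⌋} (-y)^s Z_{2s+1} Π_{j=1}^{2s} X_j`
(sites written in 0-indexed form: `X` on sites `< 2s`, `Z` on site `2s`). -/
noncomputable def yzSZM (L : ℕ) (y : ℝ) :
    Matrix (Fin L → Fin 2) (Fin L → Fin 2) ℂ :=
  ∑ s ∈ Finset.range ((L + 1) / 2), (-(y : ℂ)) ^ s •
    prodOp L (fun i => if (i : ℕ) = 2 * s then PZ else if (i : ℕ) < 2 * s then PX else 1)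

/-! ### Pauli matrix identities -/

lemma PZ_mul_PZ : PZ * PZ = 1 := by
  ext i j; fin_cases i <;> fin_cases j <;>
    simp [PZ, Matrix.mul_apply, Fin.sum_univ_two, Matrix.one_apply]

lemma PZ_mul_PY : PZ * PY = (-Complex.I) • PX := by
  ext i j; fin_cases i <;> fin_cases j <;>
    simp [PZ, PY, PX, Matrix.mul_apply, Fin.sum_univ_two]

lemma PY_mul_PZ : PY * PZ = Complex.I • PX := by
  ext i j; fin_cases i <;> fin_cases j <;>
    simp [PZ, PY, PX, Matrix.mul_apply, Fin.sum_univ_two]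

lemma PX_mul_PZ : PX * PZ = (-Complex.I) • PY := by
  ext i j; fin_cases i <;> fin_cases j <;>
    simp [PZ, PY, PX, Matrix.mul_apply, Fin.sum_univ_two]

lemma PZ_mul_PX : PZ * PX = Complex.I • PY := by
  ext i j; fin_cases i <;> fin_cases j <;>
    simp [PZ, PY, PX, Matrix.mul_apply, Fin.sum_univ_two]

lemma PX_mul_PY : PX * PY = -(PY * PX) := by
  ext i j; fin_cases i <;> fin_cases j <;>
    simp [PY, PX, Matrix.mul_apply, Fin.sum_univ_two]

lemma PX_PZ_anti : PX * PZ = -(PZ * PX) := by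
  rw [PX_mul_PZ, PZ_mul_PX]; simp

lemma PZ_PY_anti : PZ * PY = -(PY * PZ) := by
  rw [PZ_mul_PY, PY_mul_PZ]; simp

/-! ### `prodOp` algebra -/

lemma prodOp_mul (L : ℕ) (f g : Fin L → Matrix (Fin 2) (Fin 2) ℂ) :
    prodOp L f * prodOp L g = prodOp L (fun i => f i * g i) := by
  ext a b
  simp only [prodOp, Matrix.mul_apply, Matrix.of_apply]
  rw [Finset.prod_univ_sum, Fintype.piFinset_univ]
  simp_rw [Finset.prod_mul_distrib]

lemma prodOp_eq_smul (L : ℕ) (f g : Fin L → Matrix (Fin 2) (Fin 2) ℂ)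
    (a : ℕ) (ha : a < L) (c : ℂ)
    (h : ∀ i : Fin L, f i = if (i : ℕ) = a then c • g i else g i) :
    prodOp L f = c • prodOp L g := by
  ext x y
  simp only [prodOp, Matrix.of_apply, Matrix.smul_apply, smul_eq_mul]
  rw [← Finset.mul_prod_erase Finset.univ _ (Finset.mem_univ (⟨a, ha⟩ : Fin L)),
      ← Finset.mul_prod_erase Finset.univ (fun i => g i (x i) (y i))
        (Finset.mem_univ (⟨a, ha⟩ : Fin L))]
  have h1 : f ⟨a, ha⟩ = c • g ⟨a, ha⟩ := by rw [h ⟨a, ha⟩, if_pos rfl]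
  have h2 : ∀ i ∈ Finset.univ.erase (⟨a, ha⟩ : Fin L),
      f i (x i) (y i) = g i (x i) (y i) := by
    intro i hi
    have : (i : ℕ) ≠ a := by
      have := Finset.ne_of_mem_erase hi
      simpa [Fin.ext_iff] using this
    rw [h i, if_neg this]
  rw [Finset.prod_congr rfl h2, h1]
  simp only [Matrix.smul_apply, smul_eq_mul]
  ring

lemma prodOp_comm_sign (L : ℕ) (f g : Fin L → Matrix (Fin 2) (Fin 2) ℂ)
    (P : Fin L → Prop) [DecidablePred P]
    (hc : ∀ i, f i * g i = if P i then (-1 : ℂ) • (g i * f i) else g i * f i)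
    (hP : (∏ i, if P i then (-1 : ℂ) else 1) = 1) :
    prodOp L f * prodOp L g = prodOp L g * prodOp L f := by
  rw [prodOp_mul, prodOp_mul]
  ext x y
  simp only [prodOp, Matrix.of_apply]
  calc (∏ i, (f i * g i) (x i) (y i))
      = ∏ i, ((if P i then (-1:ℂ) else 1) * (g i * f i) (x i) (y i)) := by
        refine Finset.prod_congr rfl fun i _ => ?_
        rw [hc i]; split_ifs <;> simp
    _ = (∏ i, (if P i then (-1:ℂ) else 1)) * ∏ i, (g i * f i) (x i) (y i) :=
        Finset.prod_mul_distrib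
    _ = _ := by rw [hP, one_mul]

lemma prodOp_comm_all (L : ℕ) (f g : Fin L → Matrix (Fin 2) (Fin 2) ℂ)
    (h : ∀ i, f i * g i = g i * f i) :
    prodOp L f * prodOp L g = prodOp L g * prodOp L f :=
  prodOp_comm_sign L f g (fun _ => False) (by simpa using h) (by simp)

lemma prod_ite_single (L a : ℕ) (ha : a < L) (c : ℂ) :
    (∏ i : Fin L, if (i : ℕ) = a then c else 1) = c := by
  rw [Finset.prod_eq_single (⟨a, ha⟩ : Fin L)]
  · simp
  · intro i _ hi; rw [if_neg]; simpa [Fin.ext_iff] using hi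
  · simp

lemma prodOp_comm_pair (L : ℕ) (f g : Fin L → Matrix (Fin 2) (Fin 2) ℂ)
    (a b : ℕ) (hab : a ≠ b) (ha : a < L) (hb : b < L)
    (h : ∀ i : Fin L, f i * g i =
      if (i : ℕ) = a ∨ (i : ℕ) = b then (-1 : ℂ) • (g i * f i) else g i * f i) :
    prodOp L f * prodOp L g = prodOp L g * prodOp L f := by
  refine prodOp_comm_sign L f g _ h ?_
  have e : ∀ i : Fin L, (if (i:ℕ) = a ∨ (i:ℕ) = b then (-1:ℂ) else 1)
      = (if (i:ℕ) = a then (-1:ℂ) else 1) * (if (i:ℕ) = b then (-1:ℂ) else 1) := by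
    intro i; split_ifs <;> first | omega | ring
  simp_rw [e]
  rw [Finset.prod_mul_distrib, prod_ite_single L a ha, prod_ite_single L b hb]
  norm_num

lemma onSite_mul_onSite (L : ℕ) (M N : Matrix (Fin 2) (Fin 2) ℂ) (p q : Fin L) :
    onSite L M p * onSite L N q =
      prodOp L (fun i => (if i = p then M else 1) * (if i = q then N else 1)) := by
  rw [onSite, onSite, prodOp_mul]

/-! ### The building-block site functions -/

noncomputable def Fz (L s : ℕ) : Fin L → Matrix (Fin 2) (Fin 2) ℂ :=
  fun i => if (i : ℕ) = 2*s then PZ else if (i:ℕ) < 2*s then PX else 1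

noncomputable def gYf (L j : ℕ) : Fin L → Matrix (Fin 2) (Fin 2) ℂ :=
  fun i => (if (i:ℕ) = j then PY else 1) * (if (i:ℕ) = j+1 then PY else 1)

noncomputable def gZf (L j : ℕ) : Fin L → Matrix (Fin 2) (Fin 2) ℂ :=
  fun i => (if (i:ℕ) = j+1 then PZ else 1) * (if (i:ℕ) = j+2 then PZ else 1)

noncomputable def baseF (L j : ℕ) : Fin L → Matrix (Fin 2) (Fin 2) ℂ :=
  fun i => if (i:ℕ) ≤ j then PX else if (i:ℕ) = j+1 then PY else 1

lemma yzSZM_eq (L : ℕ) (y : ℝ) :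
    yzSZM L y = ∑ s ∈ Finset.range ((L + 1) / 2), (-(y : ℂ)) ^ s • prodOp L (Fz L s) := rfl

/-! ### Commutation of individual terms -/

lemma FA_comm (L j s : ℕ) (hj : j + 2 < L) (hne : 2*s ≠ j) :
    prodOp L (Fz L s) * prodOp L (gYf L j) = prodOp L (gYf L j) * prodOp L (Fz L s) := by
  rcases lt_or_gt_of_ne hne with h | h
  · apply prodOp_comm_all
    rintro ⟨iv, hi⟩
    simp only [Fz, gYf]
    split_ifs <;> first | (exfalso; omega) | simp
  · apply prodOp_comm_pair L _ _ j (j+1) (by omega) (by omega) (by omega)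
    rintro ⟨iv, hi⟩
    simp only [Fz, gYf]
    split_ifs <;> first | (exfalso; omega) | simp [PX_mul_PY, PZ_PY_anti]

lemma FB_comm (L j s : ℕ) (hj : j + 2 < L) (hne : 2*s ≠ j+2) :
    prodOp L (Fz L s) * prodOp L (gZf L j) = prodOp L (gZf L j) * prodOp L (Fz L s) := by
  rcases lt_or_gt_of_ne hne with h | h
  · apply prodOp_comm_all
    rintro ⟨iv, hi⟩
    simp only [Fz, gZf]
    split_ifs <;> first | (exfalso; omega) | simp
  · apply prodOp_comm_pair L _ _ (j+1) (j+2) (by omega) (by omega) (by omega)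
    rintro ⟨iv, hi⟩
    simp only [Fz, gZf]
    split_ifs <;> first | (exfalso; omega) | simp [PX_PZ_anti]

lemma TA_eq (L j t : ℕ) (hjt : j = 2*t) (hj : j + 2 < L) :
    prodOp L (Fz L t) * prodOp L (gYf L j) = (-Complex.I) • prodOp L (baseF L j) := by
  rw [prodOp_mul]
  apply prodOp_eq_smul L _ _ j (by omega)
  rintro ⟨iv, hi⟩
  simp only [Fz, gYf, baseF]
  split_ifs <;> first | (exfalso; omega) | simp [PZ_mul_PY]

lemma AT_eq (L j t : ℕ) (hjt : j = 2*t) (hj : j + 2 < L) :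
    prodOp L (gYf L j) * prodOp L (Fz L t) = Complex.I • prodOp L (baseF L j) := by
  rw [prodOp_mul]
  apply prodOp_eq_smul L _ _ j (by omega)
  rintro ⟨iv, hi⟩
  simp only [Fz, gYf, baseF]
  split_ifs <;> first | (exfalso; omega) | simp [PY_mul_PZ]

lemma TB_eq (L j t : ℕ) (hjt : j + 2 = 2*t) (hj : j + 2 < L) :
    prodOp L (Fz L t) * prodOp L (gZf L j) = (-Complex.I) • prodOp L (baseF L j) := by
  rw [prodOp_mul]
  apply prodOp_eq_smul L _ _ (j+1) (by omega)
  rintro ⟨iv, hi⟩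
  simp only [Fz, gZf, baseF]
  split_ifs <;> first | (exfalso; omega) | simp [PX_mul_PZ, PZ_mul_PZ]

lemma BT_eq (L j t : ℕ) (hjt : j + 2 = 2*t) (hj : j + 2 < L) :
    prodOp L (gZf L j) * prodOp L (Fz L t) = Complex.I • prodOp L (baseF L j) := by
  rw [prodOp_mul]
  apply prodOp_eq_smul L _ _ (j+1) (by omega)
  rintro ⟨iv, hi⟩
  simp only [Fz, gZf, baseF]
  split_ifs <;> first | (exfalso; omega) | simp [PZ_mul_PX, PZ_mul_PZ]

/-! ### Part 1: commutation with `Z₁ Z₂` -/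

lemma commute_ZZ (L : ℕ) (hL : 2 ≤ L) (y : ℝ) (q1 q2 : Fin L)
    (e1 : (q1:ℕ) = 0) (e2 : (q2:ℕ) = 1) :
    yzSZM L y * (onSite L PZ q1 * onSite L PZ q2) =
      (onSite L PZ q1 * onSite L PZ q2) * yzSZM L y := by
  rw [onSite_mul_onSite]
  have hg : (fun i : Fin L => (if i = q1 then PZ else 1) * (if i = q2 then PZ else 1))
      = fun i : Fin L => (if (i:ℕ) = 0 then PZ else 1) * (if (i:ℕ) = 1 then PZ else 1) := by
    funext i; simp only [Fin.ext_iff, e1, e2]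
  rw [hg, yzSZM_eq, Finset.sum_mul, Finset.mul_sum]
  refine Finset.sum_congr rfl fun s _ => ?_
  rw [smul_mul_assoc, mul_smul_comm]
  congr 1
  rcases Nat.eq_zero_or_pos s with hs | hs
  · subst hs
    apply prodOp_comm_all
    rintro ⟨iv, hi⟩
    simp only [Fz]
    split_ifs <;> first | (exfalso; omega) | simp
  · apply prodOp_comm_pair L _ _ 0 1 (by omega) (by omega) (by omega)
    rintro ⟨iv, hi⟩
    simp only [Fz]
    split_ifs <;> first | (exfalso; omega) | simp [PX_PZ_anti]

/-! ### Part 2: commutation with the bond terms -/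

lemma commute_H (L : ℕ) (y : ℝ) (j : ℕ) (hj : j + 2 < L)
    (p1 p2 q1 q2 : Fin L) (e1 : (p1:ℕ) = j) (e2 : (p2:ℕ) = j+1)
    (e3 : (q1:ℕ) = j+1) (e4 : (q2:ℕ) = j+2) :
    yzSZM L y * ((y : ℂ) • (onSite L PY p1 * onSite L PY p2)
        + onSite L PZ q1 * onSite L PZ q2) =
      ((y : ℂ) • (onSite L PY p1 * onSite L PY p2)
        + onSite L PZ q1 * onSite L PZ q2) * yzSZM L y := by
  rw [onSite_mul_onSite, onSite_mul_onSite]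
  have hgY : (fun i : Fin L => (if i = p1 then PY else 1) * (if i = p2 then PY else 1))
      = gYf L j := by
    funext i; simp only [gYf, Fin.ext_iff, e1, e2]
  have hgZ : (fun i : Fin L => (if i = q1 then PZ else 1) * (if i = q2 then PZ else 1))
      = gZf L j := by
    funext i; simp only [gZf, Fin.ext_iff, e3, e4]
  rw [hgY, hgZ, yzSZM_eq]
  rcases Nat.even_or_odd j with ⟨t, ht⟩ | hodd
  · -- j = 2t : the two anticommuting terms cancel
    have ht' : j = 2*t := by omega
    rw [← sub_eq_zero, Finset.sum_mul, Finset.mul_sum, ← Finset.sum_sub_distrib]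
    set N := prodOp L (baseF L j) with hN
    set c0 : ℂ := (-(y:ℂ))^t * (y:ℂ) * (-2*Complex.I) with hc0
    have hmem_t : t ∈ Finset.range ((L+1)/2) := Finset.mem_range.2 (by omega)
    have hmem_t1 : t+1 ∈ Finset.range ((L+1)/2) := Finset.mem_range.2 (by omega)
    have hterm : ∀ s ∈ Finset.range ((L+1)/2),
        ((-(y:ℂ))^s • prodOp L (Fz L s) * ((y:ℂ) • prodOp L (gYf L j) + prodOp L (gZf L j))
          - ((y:ℂ) • prodOp L (gYf L j) + prodOp L (gZf L j))
            * ((-(y:ℂ))^s • prodOp L (Fz L s)))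
        = (if s = t then c0 • N else 0) + (if s = t+1 then -(c0 • N) else 0) := by
      intro s _
      rcases eq_or_ne s t with rfl | hst
      · rw [if_pos rfl, if_neg (by omega), add_zero]
        have hTB := FB_comm L j s hj (by omega)
        simp only [mul_add, add_mul, smul_mul_assoc, mul_smul_comm]
        rw [TA_eq L j s ht' hj, AT_eq L j s ht' hj, hTB, hc0]
        module
      rcases eq_or_ne s (t+1) with rfl | hst1
      · rw [if_neg hst, if_pos rfl, zero_add]
        have hTA := FA_comm L j (t+1) hj (by omega)
        simp only [mul_add, add_mul, smul_mul_assoc, mul_smul_comm]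
        rw [TB_eq L j (t+1) (by omega) hj, BT_eq L j (t+1) (by omega) hj, hTA, hc0]
        module
      · rw [if_neg hst, if_neg hst1, add_zero]
        have hTA := FA_comm L j s hj (by omega)
        have hTB := FB_comm L j s hj (by omega)
        simp only [mul_add, add_mul, smul_mul_assoc, mul_smul_comm]
        rw [hTA, hTB]
        module
    rw [Finset.sum_congr rfl hterm, Finset.sum_add_distrib,
        Finset.sum_ite_eq' _ t, Finset.sum_ite_eq' _ (t+1),
        if_pos hmem_t, if_pos hmem_t1]
    simp
  · -- j odd : every term commutes
    obtain ⟨m, hm⟩ := hodd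
    rw [Finset.sum_mul, Finset.mul_sum]
    refine Finset.sum_congr rfl fun s _ => ?_
    rw [smul_mul_assoc, mul_smul_comm]
    congr 1
    have hTA := FA_comm L j s hj (by omega)
    have hTB := FB_comm L j s hj (by omega)
    simp only [mul_add, add_mul, smul_mul_assoc, mul_smul_comm]
    rw [hTA, hTB]

/-- `Ψ(y)` commutes with `Z₁ Z₂` and with every term
`y Y_j Y_{j+1} + Z_{j+1} Z_{j+2}` for `1 ≤ j ≤ L-2` (0-indexed below). -/
theorem yz_szm_commutes (L : ℕ) (hL : 2 ≤ L) (y : ℝ) :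
    (yzSZM L y * (onSite L PZ ⟨0, by omega⟩ * onSite L PZ ⟨1, by omega⟩) =
        (onSite L PZ ⟨0, by omega⟩ * onSite L PZ ⟨1, by omega⟩) * yzSZM L y) ∧
      ∀ (j : ℕ) (hj : j + 2 < L),
        yzSZM L y *
            ((y : ℂ) • (onSite L PY ⟨j, by omega⟩ * onSite L PY ⟨j + 1, by omega⟩) +
              onSite L PZ ⟨j + 1, by omega⟩ * onSite L PZ ⟨j + 2, by omega⟩) =
          ((y : ℂ) • (onSite L PY ⟨j, by omega⟩ * onSite L PY ⟨j + 1, by omega⟩) +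
              onSite L PZ ⟨j + 1, by omega⟩ * onSite L PZ ⟨j + 2, by omega⟩) *
            yzSZM L y := by
  refine ⟨commute_ZZ L hL y _ _ rfl rfl, fun j hj => commute_H L y j hj _ _ _ _ rfl rfl rfl rfl⟩
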